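/- Let s : ℕ → ℕ be a function with s(n) → ∞ and s(n) = o(n) as n → ∞, and suppose G = (V(Q_n), E′) is a spanning subgraph of the hypercube Q_n with minimum degree at least n − s(n). For a vertex v ∈ V(Q_n), let R_0(v) = {v}, and recursively for i ≥ 1 let R_i(v) = { w ∈ Γ^i_{Q_n}(v) : Γ_{Q_n}(w) ∩ Γ^{i−1}_{Q_n}(v) = Γ_G(w) ∩ R_{i−1}(v) }. Then for every v ∈ V(Q_n) and every k ≥ 1, |R_k(v)| ≥ binom(n,k) − e·n^(k−1)·s(n), where e is Euler's number. -/

import Mathlib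

open MeasureTheory Filter Set Asymptotics Topology

noncomputable section

/-- Vertices of the `n`-dimensional hypercube. -/
abbrev V (n : ℕ) : Type := Fin n → Bool

/-- The hypercube graph `Q_n`. -/
def Q (n : ℕ) : SimpleGraph (V n) :=
  SimpleGraph.fromRel (fun u v => hammingDist u v = 1)

/-- The neighbourhood of a vertex in `Q_n`. -/
def nbhd (n : ℕ) (v : V n) : Set (V n) := (Q n).neighborSet v

/-- The neighbourhood of a set of vertices. -/
def nbhdSet (n : ℕ) (A : Set (V n)) : Set (V n) := ⋃ v ∈ A, nbhd n v

/-- The set of vertices at graph distance exactly `k` from the set `A`. -/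
def sphereSet (n k : ℕ) (A : Set (V n)) : Set (V n) :=
  {w | (∃ v ∈ A, (Q n).dist v w = k) ∧ ∀ v ∈ A, k ≤ (Q n).dist v w}

/-- The ball of radius `r` about `v` (as a set of vertices). -/
def ball (n : ℕ) (v : V n) (r : ℕ) : Set (V n) := {w | (Q n).dist v w ≤ r}

/-- `χ^(r)(u) ≅ lam^(r)(w)` : the coloured `r`-balls around `u` (coloured by `χ`) and
`w` (coloured by `lam`) are isomorphic as coloured graphs. -/
def LocallyEq {C : Type} (n r : ℕ) (χ lam : V n → C) (u w : V n) : Prop :=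
  ∃ φ : ((Q n).induce (ball n u r)) ≃g ((Q n).induce (ball n w r)),
    ∀ x : ball n u r, χ x.1 = lam ((φ x).1)

/-- `d(χ^(r)(u), lam^(r)(w)) ≤ m` : some isomorphism of the `r`-balls realises at most `m`
colour disagreements. -/
def BallDistLE {C : Type} (n r : ℕ) (χ lam : V n → C) (u w : V n) (m : ℝ) : Prop :=
  ∃ φ : ((Q n).induce (ball n u r)) ≃g ((Q n).induce (ball n w r)),
    (({x : ball n u r | χ x.1 ≠ lam ((φ x).1)}.ncard : ℝ)) ≤ m

/-- A colouring is `r`-distinguishable if every `r`-locally equivalent colouring is obtained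
from it by a graph automorphism. -/
def Distinguishable {C : Type} (n r : ℕ) (χ : V n → C) : Prop :=
  ∀ lam : V n → C,
    (∃ f : V n ≃ V n, ∀ v, LocallyEq n r χ lam v (f v)) →
    ∃ g : (Q n) ≃g (Q n), lam = fun v => χ (g.symm v)

/-- `Isom^(r)(χ)` : the set of bijections `f` with `χ^(r)(v) ≅ (χ ∘ f⁻¹)^(r)(f v)` for all `v`. -/
def IsomSet {C : Type} (n r : ℕ) (χ : V n → C) : Set (V n ≃ V n) :=
  {f | ∀ v, LocallyEq n r χ (fun x => χ (f.symm x)) v (f v)}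

/-- `Cluster^r_R` : bijections `h` such that `|Γ^r(h(Γ(v)))| ≤ binom(n, r+1) + R` for all `v`. -/
def ClusterSet (n r : ℕ) (R : ℝ) : Set (V n ≃ V n) :=
  {h | ∀ v, ((sphereSet n r (⇑h '' nbhd n v)).ncard : ℝ) ≤ (n.choose (r+1) : ℝ) + R}

/-- `g` is a dual of `f` (at level `s`): `|f(Γ(v)) ∩ Γ(g(v))| ≥ n − s` for all `v`. -/
def IsDualF (n : ℕ) (s : ℝ) (f g : V n → V n) : Prop :=
  ∀ v, (n : ℝ) - s ≤ (((f '' nbhd n v) ∩ nbhd n (g v)).ncard : ℝ)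

/-- `f` is `s`-approximately local: it has a dual at level `s`. -/
def ApproxLocalF (n : ℕ) (s : ℝ) (f : V n → V n) : Prop :=
  ∃ g : V n → V n, IsDualF n s f g

/-- `Local_s` : the set of `s`-approximately local bijections. -/
def LocalSet (n : ℕ) (s : ℝ) : Set (V n ≃ V n) :=
  {f | ApproxLocalF n s ⇑f}

/-- `Mono^t_s` : bijections in `Cluster¹_s` for which, for every `v`, at most one vertex `w`
has `|f(Γ(v)) ∩ Γ(w)| > t`. -/
def MonoSet (n : ℕ) (s t : ℝ) : Set (V n ≃ V n) :=
  {f | f ∈ ClusterSet n 1 s ∧ ∀ v w₁ w₂ : V n,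
      t < (((⇑f '' nbhd n v) ∩ nbhd n w₁).ncard : ℝ) →
      t < (((⇑f '' nbhd n v) ∩ nbhd n w₂).ncard : ℝ) → w₁ = w₂}

/-- The dual `f_⋆` of `f` : for each `v`, a vertex `w` maximising `|f(Γ(v)) ∩ Γ(w)|`
(which is the unique dual vertex whenever `f` is `s`-approximately local with `s < n/2`). -/
def dualF (n : ℕ) (f : V n → V n) : V n → V n :=
  fun v => Classical.epsilon fun w =>
    ∀ w', ((f '' nbhd n v) ∩ nbhd n w').ncard ≤ ((f '' nbhd n v) ∩ nbhd n w).ncard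

/-- The Bernoulli measure on `Bool`: `false` (colour 0) has probability `p`,
`true` (colour 1) has probability `1 - p`. -/
def bern (p : ℝ) : Measure Bool :=
  ENNReal.ofReal p • Measure.dirac false + ENNReal.ofReal (1 - p) • Measure.dirac true

/-- The law of a random `(p, 1-p)`-colouring of `Q_n`: i.i.d. Bernoulli colours. -/
def colMeasure (n : ℕ) (p : ℝ) : Measure (V n → Bool) :=
  Measure.pi fun _ => bern p

/-- The uniform measure on `Fin q`. -/
def unifFin (q : ℕ) : Measure (Fin q) :=
  ((q : ENNReal))⁻¹ • Measure.count

/-- The law of a random `q`-colouring of `Q_n`: i.i.d. uniform colours. -/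
def qColMeasure (n q : ℕ) : Measure (V n → Fin q) :=
  Measure.pi fun _ => unifFin q

/-- The rigid sets `R_i(v)` determined by a spanning subgraph `G` of `Q_n`:
`R_0(v) = {v}` and `R_i(v)` consists of those `w` at distance exactly `i` from `v` in `Q_n`
with `Γ_{Q_n}(w) ∩ Γ^{i-1}_{Q_n}(v) = Γ_G(w) ∩ R_{i-1}(v)`. -/
def Rset (n : ℕ) (G : SimpleGraph (V n)) (v : V n) : ℕ → Set (V n)
  | 0 => {v}
  | (i + 1) => {w | (Q n).dist v w = i + 1 ∧
      (Q n).neighborSet w ∩ {x | (Q n).dist v x = i} =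
        G.neighborSet w ∩ Rset n G v i}

section AuxRigid
open Finset

lemma Q_adj {n : ℕ} {u v : V n} : (Q n).Adj u v ↔ hammingDist u v = 1 := by
  constructor
  · rintro ⟨hne, h | h⟩
    · exact h
    · rwa [hammingDist_comm]
  · intro h
    refine ⟨?_, Or.inl h⟩
    intro he; rw [he] at h; simp [hammingDist_self] at h

lemma hamming_le_walk {n : ℕ} {u v : V n} (p : (Q n).Walk u v) :
    hammingDist u v ≤ p.length := by
  induction p with
  | nil => simp [hammingDist_self]
  | cons h p ih =>
    rename_i a b c
    have h1 : hammingDist a b = 1 := Q_adj.mp h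
    calc hammingDist a c ≤ hammingDist a b + hammingDist b c := hammingDist_triangle _ _ _
    _ ≤ 1 + p.length := by omega
    _ = (SimpleGraph.Walk.cons h p).length := by simp [SimpleGraph.Walk.length_cons]; omega

lemma exists_walk_hamming {n : ℕ} : ∀ (d : ℕ) (u v : V n), hammingDist u v = d →
    ∃ p : (Q n).Walk u v, p.length = d := by
  intro d
  induction d with
  | zero => intro u v h; rw [hammingDist_eq_zero] at h; subst h; exact ⟨.nil, rfl⟩
  | succ d ih =>
    intro u v h
    have hpos : ({j | u j ≠ v j} : Finset (Fin n)).Nonempty := by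
      rw [← Finset.card_pos]
      have : ({j | u j ≠ v j} : Finset (Fin n)).card = hammingDist u v := rfl
      omega
    obtain ⟨i, hi⟩ := hpos
    rw [Finset.mem_filter] at hi
    replace hi : u i ≠ v i := hi.2
    set u' : V n := Function.update u i (v i) with hu'
    have h1 : hammingDist u u' = 1 := by
      have : ({j | u j ≠ u' j} : Finset (Fin n)) = {i} := by
        ext j
        by_cases hj : j = i <;> simp [hu', Function.update, hj, hi]
      simp [hammingDist, this]
    have h2 : hammingDist u' v = d := by
      have : ({j | u' j ≠ v j} : Finset (Fin n)) = ({j | u j ≠ v j} : Finset (Fin n)) \ {i} := by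
        ext j
        by_cases hj : j = i <;> simp [hu', Function.update, hj]
      have hicard : ({j | u j ≠ v j} : Finset (Fin n)).card = d + 1 := h
      have himem : i ∈ ({j | u j ≠ v j} : Finset (Fin n)) := by simp [hi]
      rw [hammingDist, this, Finset.sdiff_singleton_eq_erase, Finset.card_erase_of_mem himem, hicard]
      omega
    obtain ⟨p, hp⟩ := ih u' v h2
    exact ⟨.cons (Q_adj.mpr h1) p, by simp [hp]⟩

lemma Q_dist {n : ℕ} (u v : V n) : (Q n).dist u v = hammingDist u v := by
  obtain ⟨p, hp⟩ := exists_walk_hamming (hammingDist u v) u v rfl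
  refine le_antisymm (hp ▸ SimpleGraph.dist_le p) ?_
  obtain ⟨q, hq⟩ := SimpleGraph.Reachable.exists_walk_length_eq_dist ⟨p⟩
  rw [← hq]; exact hamming_le_walk q

lemma sphere_card {n : ℕ} (v : V n) (k : ℕ) :
    ({w : V n | hammingDist v w = k} : Finset (V n)).card = n.choose k := by
  have h := Finset.card_powersetCard k (univ : Finset (Fin n))
  rw [Finset.card_univ, Fintype.card_fin] at h
  rw [← h]
  apply Finset.card_nbij' (i := fun w => ({j | v j ≠ w j} : Finset (Fin n)))
    (j := fun T => fun idx => if idx ∈ T then !(v idx) else v idx)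
  · intro w hw
    simp only [Finset.mem_coe, Finset.mem_filter, Finset.mem_univ, true_and] at hw
    simp only [Finset.mem_coe, Finset.mem_powersetCard]
    exact ⟨Finset.subset_univ _, hw⟩
  · intro T hT
    simp only [Finset.mem_coe, Finset.mem_powersetCard] at hT
    simp only [Finset.mem_coe, Finset.mem_filter, Finset.mem_univ, true_and]
    rw [← hT.2, hammingDist]
    congr 1
    ext j
    by_cases hj : j ∈ T <;> simp [hj]
  · intro w hw
    funext idx
    by_cases hd : v idx ≠ w idx <;> simp [hd] <;> revert hd <;>
      cases v idx <;> cases w idx <;> simp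
  · intro T hT
    ext j
    by_cases hj : j ∈ T <;> simp [hj]

open scoped Classical

section Main
variable {n : ℕ} (G : SimpleGraph (V n)) (s : ℝ) (v : V n)

private noncomputable def L (k : ℕ) : Finset (V n) := Finset.univ.filter fun w => (Q n).dist v w = k
private noncomputable def Rf (k : ℕ) : Finset (V n) := (Rset n G v k).toFinset
private noncomputable def B (k : ℕ) : Finset (V n) := L v k \ Rf G v k
private noncomputable def upN (x : V n) : Finset (V n) := Finset.univ.filter fun w => (Q n).Adj x w
private noncomputable def missUp (x : V n) : Finset (V n) :=
  Finset.univ.filter fun w => (Q n).Adj x w ∧ ¬ G.Adj x w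

lemma cardL (k : ℕ) : (L v k).card = n.choose k := by
  rw [← sphere_card v k]
  congr 1
  ext w
  simp [L, Q_dist]

lemma card_upN (x : V n) : (upN x).card = n := by
  have h := sphere_card x 1
  rw [Nat.choose_one_right] at h
  have he : upN x = ({w : V n | hammingDist x w = 1} : Finset (V n)) := by
    ext w; simp [upN, Q_adj]
  rw [he, h]

lemma Rsub : ∀ k, Rf G v k ⊆ L v k := by
  intro k w hw
  rw [Rf, Set.mem_toFinset] at hw
  simp only [L, Finset.mem_filter, Finset.mem_univ, true_and]
  match k with
  | 0 => rw [Rset, Set.mem_singleton_iff] at hw; subst hw; exact SimpleGraph.dist_self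
  | (i+1) => exact hw.1

lemma B0 : B G v 0 = ∅ := by
  rw [Finset.eq_empty_iff_forall_notMem]
  intro w hw
  rw [B, Finset.mem_sdiff, L, Finset.mem_filter] at hw
  obtain ⟨⟨-, hd⟩, hr⟩ := hw
  apply hr
  rw [Rf, Set.mem_toFinset, Rset, Set.mem_singleton_iff]
  have : hammingDist v w = 0 := by rw [← Q_dist]; exact hd
  exact (hammingDist_eq_zero.mp this).symm

lemma card_missUp (hG : G ≤ Q n)
    (hdeg : ∀ v : V n, (n : ℝ) - s ≤ ((G.neighborSet v).ncard : ℝ)) (x : V n) : ((missUp G x).card : ℝ) ≤ s := by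
  have hsub : (G.neighborSet x).toFinset ⊆ upN x := by
    intro w hw
    rw [Set.mem_toFinset] at hw
    simp only [upN, Finset.mem_filter, Finset.mem_univ, true_and]
    exact hG hw
  have heq : missUp G x = upN x \ (G.neighborSet x).toFinset := by
    ext w
    simp [missUp, upN, SimpleGraph.mem_neighborSet]
  have hd : ((G.neighborSet x).ncard : ℝ) = ((G.neighborSet x).toFinset.card : ℝ) := by
    rw [Set.ncard_eq_toFinset_card']
  have hle := Finset.card_le_card hsub
  rw [heq, Finset.card_sdiff_of_subset hsub]
  have := hdeg x
  rw [hd] at this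
  rw [Nat.cast_sub hle, card_upN]
  linarith

lemma Bstep (hG : G ≤ Q n) (k : ℕ) :
    B G v (k+1) ⊆ (L v k).biUnion (missUp G) ∪ (B G v k).biUnion upN := by
  intro w hw
  rw [B, Finset.mem_sdiff, L, Finset.mem_filter] at hw
  obtain ⟨⟨-, hd⟩, hr⟩ := hw
  have hne : (Q n).neighborSet w ∩ {x | (Q n).dist v x = k} ≠
      G.neighborSet w ∩ Rset n G v k := by
    intro he
    exact hr (by rw [Rf, Set.mem_toFinset]; exact ⟨hd, he⟩)
  have hsub2 : G.neighborSet w ∩ Rset n G v k ⊆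
      (Q n).neighborSet w ∩ {x | (Q n).dist v x = k} := by
    rintro x ⟨hx1, hx2⟩
    refine ⟨hG hx1, ?_⟩
    have := Rsub G v k (by rw [Rf, Set.mem_toFinset]; exact hx2)
    simpa [L] using this
  have : ∃ x, x ∈ (Q n).neighborSet w ∩ {x | (Q n).dist v x = k} ∧
      x ∉ G.neighborSet w ∩ Rset n G v k := by
    by_contra hc
    push_neg at hc
    exact hne (le_antisymm (fun x hx => hc x hx) hsub2)
  obtain ⟨x, ⟨hadj, hdx⟩, hnot⟩ := this
  have hadj' : (Q n).Adj w x := hadj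
  have hdx' : (Q n).dist v x = k := hdx
  rw [Finset.mem_union]
  by_cases hgx : G.Adj w x
  · right
    rw [Finset.mem_biUnion]
    refine ⟨x, ?_, ?_⟩
    · rw [B, Finset.mem_sdiff]
      constructor
      · simp [L, hdx']
      · rw [Rf, Set.mem_toFinset]
        intro hxR
        exact hnot ⟨hgx, hxR⟩
    · simp [upN]; exact hadj'.symm
  · left
    rw [Finset.mem_biUnion]
    refine ⟨x, by simp [L, hdx'], ?_⟩
    simp only [missUp, Finset.mem_filter, Finset.mem_univ, true_and]
    exact ⟨hadj'.symm, fun h => hgx h.symm⟩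

set_option maxHeartbeats 1000000 in
lemma Bcard_step (hG : G ≤ Q n)
    (hdeg : ∀ v : V n, (n : ℝ) - s ≤ ((G.neighborSet v).ncard : ℝ)) (k : ℕ) :
    ((B G v (k+1)).card : ℝ) ≤ s * n.choose k + n * (B G v k).card := by
  have h1 := Finset.card_le_card (Bstep G v hG k)
  have h2 := Finset.card_union_le ((L v k).biUnion (missUp G)) ((B G v k).biUnion upN)
  have h3 := Finset.card_biUnion_le (s := L v k) (t := missUp G)
  have h4 := Finset.card_biUnion_le (s := B G v k) (t := upN)
  have h5 : ((∑ x ∈ L v k, (missUp G x).card : ℕ) : ℝ) ≤ s * n.choose k := by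
    push_cast
    calc (∑ x ∈ L v k, ((missUp G x).card : ℝ)) ≤ ∑ _x ∈ L v k, s :=
      Finset.sum_le_sum fun x _ => card_missUp G s hG hdeg x
    _ = (L v k).card * s := by rw [Finset.sum_const, nsmul_eq_mul]
    _ = s * n.choose k := by rw [cardL]; ring
  have h6 : ((∑ x ∈ B G v k, (upN x).card : ℕ) : ℝ) = n * (B G v k).card := by
    have : ∀ x ∈ B G v k, (upN x).card = n := fun x _ => card_upN x
    rw [Finset.sum_congr rfl this, Finset.sum_const, smul_eq_mul]
    push_cast; ring
  have := h1.trans h2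
  have hc : ((B G v (k+1)).card : ℝ) ≤
      ((((L v k).biUnion (missUp G)).card : ℕ) : ℝ) + (((B G v k).biUnion upN).card : ℝ) := by
    exact_mod_cast this
  calc ((B G v (k+1)).card : ℝ)
      ≤ ((((L v k).biUnion (missUp G)).card : ℕ) : ℝ) + (((B G v k).biUnion upN).card : ℝ) := hc
    _ ≤ ((∑ x ∈ L v k, (missUp G x).card : ℕ) : ℝ) + ((∑ x ∈ B G v k, (upN x).card : ℕ) : ℝ) := by
        exact add_le_add (by exact_mod_cast h3) (by exact_mod_cast h4)
    _ ≤ s * n.choose k + n * (B G v k).card := by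
        rw [h6]; exact add_le_add h5 le_rfl


lemma Bbound (hG : G ≤ Q n) (hs0 : 0 ≤ s)
    (hdeg : ∀ v : V n, (n : ℝ) - s ≤ ((G.neighborSet v).ncard : ℝ)) :
    ∀ k : ℕ, ((B G v (k+1)).card : ℝ) ≤
      s * (n:ℝ)^k * ∑ j ∈ Finset.range (k+1), (1:ℝ)/(Nat.factorial j) := by
  intro k
  induction k with
  | zero =>
    have h := Bcard_step G s v hG hdeg 0
    rw [B0] at h
    simp only [Nat.choose_zero_right, Nat.cast_one, mul_one, Finset.card_empty,
      Nat.cast_zero, mul_zero, add_zero] at h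
    simpa [Nat.factorial] using h
  | succ k ih =>
    have h := Bcard_step G s v hG hdeg (k+1)
    have hch : ((n.choose (k+1)) : ℝ) ≤ (n:ℝ)^(k+1) / (Nat.factorial (k+1)) :=
      Nat.choose_le_pow_div (k+1) n
    have h1 : s * ((n.choose (k+1)):ℝ) ≤ s * ((n:ℝ)^(k+1) / (Nat.factorial (k+1))) :=
      mul_le_mul_of_nonneg_left hch hs0
    have h2 : (n:ℝ) * ((B G v (k+1)).card : ℝ) ≤
        (n:ℝ) * (s * (n:ℝ)^k * ∑ j ∈ Finset.range (k+1), (1:ℝ)/(Nat.factorial j)) :=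
      mul_le_mul_of_nonneg_left ih (Nat.cast_nonneg n)
    rw [Finset.sum_range_succ]
    calc ((B G v (k+2)).card : ℝ)
        ≤ s * (n.choose (k+1)) + n * (B G v (k+1)).card := h
      _ ≤ s * ((n:ℝ)^(k+1) / (Nat.factorial (k+1))) +
          (n:ℝ) * (s * (n:ℝ)^k * ∑ j ∈ Finset.range (k+1), (1:ℝ)/(Nat.factorial j)) :=
        add_le_add h1 h2
      _ = s * (n:ℝ)^(k+1) *
          ((∑ j ∈ Finset.range (k+1), (1:ℝ)/(Nat.factorial j)) +
            (1:ℝ)/(Nat.factorial (k+1))) := by ring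

lemma Rbound (hG : G ≤ Q n) (hs0 : 0 ≤ s)
    (hdeg : ∀ v : V n, (n : ℝ) - s ≤ ((G.neighborSet v).ncard : ℝ))
    (k : ℕ) (hk : 1 ≤ k) :
    (n.choose k : ℝ) - Real.exp 1 * (n:ℝ)^(k-1) * s ≤ ((Rset n G v k).ncard : ℝ) := by
  obtain ⟨m, rfl⟩ : ∃ m, k = m + 1 := ⟨k - 1, by omega⟩
  have hB := Bbound G s v hG hs0 hdeg m
  have hexp : (∑ j ∈ Finset.range (m+1), (1:ℝ)/(Nat.factorial j)) ≤ Real.exp 1 := by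
    have h := Real.sum_le_exp_of_nonneg (zero_le_one) (m+1)
    simpa [one_div] using h
  have hsub := Rsub G v (m+1)
  have hsplit : (B G v (m+1)).card = (L v (m+1)).card - (Rf G v (m+1)).card := by
    rw [B, Finset.card_sdiff_of_subset hsub]
  have hle := Finset.card_le_card hsub
  have hnc : (Rset n G v (m+1)).ncard = (Rf G v (m+1)).card := by
    rw [Rf, Set.ncard_eq_toFinset_card']
  have hcast : ((Rf G v (m+1)).card : ℝ) = (n.choose (m+1) : ℝ) - ((B G v (m+1)).card : ℝ) := by
    rw [hsplit, Nat.cast_sub hle, cardL]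
    ring
  have hpow : (0:ℝ) ≤ (n:ℝ)^m := pow_nonneg (Nat.cast_nonneg n) m
  have hFle : s * (n:ℝ)^m * (∑ j ∈ Finset.range (m+1), (1:ℝ)/(Nat.factorial j)) ≤
      Real.exp 1 * (n:ℝ)^m * s := by
    have := mul_le_mul_of_nonneg_left hexp (mul_nonneg hs0 hpow)
    calc s * (n:ℝ)^m * (∑ j ∈ Finset.range (m+1), (1:ℝ)/(Nat.factorial j))
        = s * (n:ℝ)^m * (∑ j ∈ Finset.range (m+1), (1:ℝ)/(Nat.factorial j)) := rfl
      _ ≤ s * (n:ℝ)^m * Real.exp 1 := this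
      _ = Real.exp 1 * (n:ℝ)^m * s := by ring
  rw [hnc, hcast]
  simp only [Nat.add_sub_cancel]
  linarith

end Main

end AuxRigid

/-- Lemma 3.14 (krigid): if `G` is a spanning subgraph of `Q_n` with minimum degree at least
`n - s(n)`, then `|R_k(v)| ≥ binom(n,k) - e·n^(k-1)·s(n)` for all `v` and `k ≥ 1`. -/
theorem rigid_sets_large
    (s : ℕ → ℕ) (hs : Tendsto s atTop atTop)
    (hso : (fun n => (s n : ℝ)) =o[atTop] fun n => (n : ℝ))
    (n : ℕ) (G : SimpleGraph (V n)) (hG : G ≤ Q n)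
    (hdeg : ∀ v : V n, (n : ℝ) - s n ≤ ((G.neighborSet v).ncard : ℝ)) :
    ∀ v : V n, ∀ k : ℕ, 1 ≤ k →
      (n.choose k : ℝ) - Real.exp 1 * (n : ℝ) ^ (k - 1) * s n ≤ ((Rset n G v k).ncard : ℝ) := by
  intro v k hk
  exact Rbound G ((s n : ℝ)) v hG (Nat.cast_nonneg _) hdeg k hk

end
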